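/- Let ξ_1, …, ξ_n be independent and identically distributed random variables with E[ξ_1] < ∞ and Var[ξ_1] < ∞. Then E[max_{1 ≤ k ≤ n} ξ_k] ≤ E[ξ_1] + ((n−1)/√(2n−1)) · √(Var[ξ_1]). -/

import Mathlib

open MeasureTheory ProbabilityTheory Finset Set Filter
open scoped Topology ENNReal NNReal

section Aux

variable {α : Type*} [MeasurableSpace α] {μ : Measure α}

lemma my_integrable_mul {f g : α → ℝ} (hf : MemLp f 2 μ) (hg : MemLp g 2 μ) :
    Integrable (fun x => f x * g x) μ := by
  refine Integrable.mono' ((hf.integrable_sq.add hg.integrable_sq).div_const 2)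
    (hf.1.mul hg.1) (Filter.Eventually.of_forall fun x => ?_)
  simp only [Pi.add_apply, Pi.div_apply]
  rw [Real.norm_eq_abs, abs_mul]
  nlinarith [sq_nonneg (|f x| - |g x|), abs_nonneg (f x), abs_nonneg (g x),
    sq_abs (f x), sq_abs (g x)]

/-- Cauchy–Schwarz inequality for integrals of real functions. -/
lemma my_integral_mul_le {f g : α → ℝ} (hf : MemLp f 2 μ) (hg : MemLp g 2 μ) :
    ∫ x, f x * g x ∂μ ≤ Real.sqrt (∫ x, f x ^ 2 ∂μ) * Real.sqrt (∫ x, g x ^ 2 ∂μ) := by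
  set A := ∫ x, f x ^ 2 ∂μ with hA
  set B := ∫ x, f x * g x ∂μ with hB
  set C := ∫ x, g x ^ 2 ∂μ with hC
  have hAnn : 0 ≤ A := integral_nonneg fun x => sq_nonneg _
  have hCnn : 0 ≤ C := integral_nonneg fun x => sq_nonneg _
  have hfg := my_integrable_mul hf hg
  have key : ∀ t : ℝ, 0 ≤ C * (t * t) + (2 * B) * t + A := by
    intro t
    have h0 : 0 ≤ ∫ x, (f x + t * g x) ^ 2 ∂μ := integral_nonneg fun x => sq_nonneg _
    have hexp : ∫ x, (f x + t * g x) ^ 2 ∂μ = C * (t * t) + (2 * B) * t + A := by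
      have hptw : ∀ x, (f x + t * g x) ^ 2
          = (t * t) * g x ^ 2 + (2 * t) * (f x * g x) + f x ^ 2 := fun x => by ring
      simp_rw [hptw]
      have h1 : Integrable (fun x => (t * t) * g x ^ 2) μ := hg.integrable_sq.const_mul _
      have h2 : Integrable (fun x => (2 * t) * (f x * g x)) μ := hfg.const_mul _
      have h12 : Integrable (fun x => t * t * g x ^ 2 + 2 * t * (f x * g x)) μ := h1.add h2
      rw [integral_add h12 hf.integrable_sq, integral_add h1 h2,
        MeasureTheory.integral_const_mul, MeasureTheory.integral_const_mul]
      ring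
    linarith [hexp ▸ h0]
  have hd : discrim C (2 * B) A ≤ 0 := discrim_le_zero key
  rw [discrim] at hd
  have hBsq : B ^ 2 ≤ A * C := by nlinarith
  calc B ≤ |B| := le_abs_self B
    _ = Real.sqrt (B ^ 2) := (Real.sqrt_sq_eq_abs B).symm
    _ ≤ Real.sqrt (A * C) := Real.sqrt_le_sqrt hBsq
    _ = Real.sqrt A * Real.sqrt C := Real.sqrt_mul hAnn _

end Aux

section Quantile

/-- Quantile function (generalized inverse cdf). -/
noncomputable def qf (ν : Measure ℝ) (p : ℝ) : ℝ := sInf {x | p ≤ cdf ν x}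

variable {ν : Measure ℝ}

lemma qf_le_iff {p : ℝ} (hp : p ∈ Set.Ioo (0:ℝ) 1) (x : ℝ) :
    qf ν p ≤ x ↔ p ≤ cdf ν x := by
  set S := {x | p ≤ cdf ν x} with hS
  have hne : S.Nonempty := by
    obtain ⟨x, hx⟩ := ((tendsto_cdf_atTop ν).eventually (lt_mem_nhds hp.2)).exists
    exact ⟨x, hx.le⟩
  have hbdd : BddBelow S := by
    obtain ⟨x₀, hx₀⟩ := ((tendsto_cdf_atBot ν).eventually (gt_mem_nhds hp.1)).exists
    refine ⟨x₀, fun y hy => ?_⟩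
    by_contra hlt
    exact absurd ((monotone_cdf ν) (le_of_not_ge hlt)) (by simp only [not_le]; exact lt_of_lt_of_le hx₀ hy)
  have hQ : p ≤ cdf ν (qf ν p) := by
    have upper : ∀ y ∈ Set.Ioi (qf ν p), p ≤ cdf ν y := by
      intro y hy
      obtain ⟨s, hsS, hs⟩ := (csInf_lt_iff hbdd hne).1 hy
      exact le_trans hsS ((monotone_cdf ν) hs.le)
    have hrc : Filter.Tendsto (cdf ν) (𝓝[>] (qf ν p)) (𝓝 (cdf ν (qf ν p))) :=
      ((cdf ν).right_continuous (qf ν p)).mono_left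
        (nhdsWithin_mono _ Set.Ioi_subset_Ici_self)
    exact ge_of_tendsto hrc (eventually_mem_nhdsWithin.mono upper)
  constructor
  · intro h
    exact le_trans hQ ((monotone_cdf ν) h)
  · intro h
    exact csInf_le hbdd h

lemma qf_monotoneOn : MonotoneOn (qf ν) (Set.Ioo (0:ℝ) 1) := by
  intro p hp q hq hpq
  have := (qf_le_iff hq (qf ν q)).1 le_rfl
  exact (qf_le_iff hp (qf ν q)).2 (le_trans hpq this)

end Quantile
section QMap

variable {ν : Measure ℝ} [IsProbabilityMeasure ν]

lemma qf_preimage_inter (x : ℝ) :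
    qf ν ⁻¹' Set.Iic x ∩ Set.Ioo 0 1 = Set.Ioo (0:ℝ) 1 ∩ Set.Iic (cdf ν x) := by
  ext p
  constructor
  · rintro ⟨h1, h2⟩; exact ⟨h2, (qf_le_iff h2 x).1 h1⟩
  · rintro ⟨h2, h1⟩; exact ⟨(qf_le_iff h2 x).2 h1, h2⟩

lemma vol_Ioo_inter_Iic {c : ℝ} (h1 : c ≤ 1) :
    MeasureTheory.volume (Set.Ioo (0:ℝ) 1 ∩ Set.Iic c) = ENNReal.ofReal c := by
  rcases lt_or_ge c 1 with hc | hc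
  · have h : Set.Ioo (0:ℝ) 1 ∩ Set.Iic c = Set.Ioc 0 c := by
      ext p
      simp only [Set.mem_inter_iff, Set.mem_Ioo, Set.mem_Iic, Set.mem_Ioc]
      exact ⟨fun ⟨⟨a, _⟩, d⟩ => ⟨a, d⟩, fun ⟨a, b⟩ => ⟨⟨a, lt_of_le_of_lt b hc⟩, b⟩⟩
    rw [h, Real.volume_Ioc, sub_zero]
  · have hc1 : c = 1 := le_antisymm h1 hc
    subst hc1
    have h : Set.Ioo (0:ℝ) 1 ∩ Set.Iic 1 = Set.Ioo (0:ℝ) 1 := by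
      ext p
      simp only [Set.mem_inter_iff, Set.mem_Ioo, Set.mem_Iic]
      exact ⟨fun h => h.1, fun h => ⟨h, h.2.le⟩⟩
    rw [h, Real.volume_Ioo]; norm_num

lemma qf_aemeasurable : AEMeasurable (qf ν) (volume.restrict (Set.Ioo (0:ℝ) 1)) :=
  aemeasurable_restrict_of_monotoneOn measurableSet_Ioo qf_monotoneOn

instance : IsProbabilityMeasure (volume.restrict (Set.Ioo (0:ℝ) 1)) := by
  constructor
  rw [Measure.restrict_apply_univ, Real.volume_Ioo]
  norm_num

lemma qf_map_volume : (volume.restrict (Set.Ioo (0:ℝ) 1)).map (qf ν) = ν := by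
  haveI : IsProbabilityMeasure ((volume.restrict (Set.Ioo (0:ℝ) 1)).map (qf ν)) :=
    Measure.isProbabilityMeasure_map qf_aemeasurable
  refine Measure.ext_of_Iic _ _ fun x => ?_
  rw [Measure.map_apply_of_aemeasurable qf_aemeasurable measurableSet_Iic,
    Measure.restrict_apply' measurableSet_Ioo, qf_preimage_inter,
    vol_Ioo_inter_Iic (cdf_le_one ν x), ofReal_cdf]

end QMap

section PowInt

lemma my_setIntegral_pow (n : ℕ) (hn : 0 < n) {c : ℝ} (h0 : 0 ≤ c) :
    ∫ p in Set.Ioc (0:ℝ) c, ((n:ℝ) * p ^ (n-1)) = c ^ n := by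
  rw [← intervalIntegral.integral_of_le h0, intervalIntegral.integral_const_mul, integral_pow,
    Nat.sub_add_cancel hn, zero_pow hn.ne']
  have h1 : ((n - 1 : ℕ) : ℝ) + 1 = (n : ℝ) := by
    rw [Nat.cast_sub hn]; ring
  rw [h1]
  have hnne : (n : ℝ) ≠ 0 := Nat.cast_ne_zero.2 hn.ne'
  field_simp
  rw [sub_zero]

lemma my_setLIntegral_pow (n : ℕ) (hn : 0 < n) {c : ℝ} (h0 : 0 ≤ c) :
    ∫⁻ p in Set.Ioc (0:ℝ) c, ENNReal.ofReal ((n:ℝ) * p ^ (n-1)) = ENNReal.ofReal (c ^ n) := by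
  rw [← ofReal_integral_eq_lintegral_ofReal, my_setIntegral_pow n hn h0]
  · exact (continuous_const.mul (continuous_pow _)).integrableOn_Ioc
  · refine (ae_restrict_iff' measurableSet_Ioc).2 (Filter.Eventually.of_forall fun p hp => ?_)
    have hp0 : 0 ≤ p := hp.1.le
    positivity

end PowInt
lemma Ioo_inter_Iic_ae_Ioc {c : ℝ} (h1 : c ≤ 1) :
    (Set.Ioo (0:ℝ) 1 ∩ Set.Iic c : Set ℝ) =ᵐ[volume] Set.Ioc 0 c := by
  rcases lt_or_ge c 1 with hc | hc
  · have h : Set.Ioo (0:ℝ) 1 ∩ Set.Iic c = Set.Ioc 0 c := by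
      ext p
      simp only [Set.mem_inter_iff, Set.mem_Ioo, Set.mem_Iic, Set.mem_Ioc]
      exact ⟨fun ⟨⟨a, _⟩, d⟩ => ⟨a, d⟩, fun ⟨a, b⟩ => ⟨⟨a, lt_of_le_of_lt b hc⟩, b⟩⟩
    rw [h]
    exact Filter.EventuallyEq.rfl
  · have hc1 : c = 1 := le_antisymm h1 hc
    subst hc1
    have h : Set.Ioo (0:ℝ) 1 ∩ Set.Iic 1 = Set.Ioo (0:ℝ) 1 := by
      ext p
      simp only [Set.mem_inter_iff, Set.mem_Ioo, Set.mem_Iic]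
      exact ⟨fun h => h.1, fun h => ⟨h, h.2.le⟩⟩
    rw [h]
    exact MeasureTheory.Ioo_ae_eq_Ioc

/-- **Gumbel–Hartley–David bound.** If `ξ 1, …, ξ n` are i.i.d. random
variables with finite mean and finite variance, then
`E[max_{1 ≤ k ≤ n} ξ k] ≤ E[ξ 1] + ((n-1)/√(2n-1)) √(Var[ξ 1])`. -/
theorem mean_max_iid_le
    {Ω : Type*} [MeasurableSpace Ω] (μ : Measure Ω) [IsProbabilityMeasure μ]
    (n : ℕ) (hn : 0 < n) (ξ : Fin n → Ω → ℝ)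
    (hmeas : ∀ k, Measurable (ξ k))
    (hindep : iIndepFun ξ μ)
    (hident : ∀ k, IdentDistrib (ξ k) (ξ ⟨0, hn⟩) μ μ)
    (hint : Integrable (ξ ⟨0, hn⟩) μ)
    (hvar : MemLp (ξ ⟨0, hn⟩) 2 μ) :
    ∫ ω, (Finset.univ.sup' (Finset.univ_nonempty_iff.mpr (Fin.pos_iff_nonempty.mp hn))
          fun k : Fin n => ξ k ω) ∂μ
      ≤ (∫ ω, ξ ⟨0, hn⟩ ω ∂μ)
          + ((n : ℝ) - 1) / Real.sqrt (2 * (n : ℝ) - 1)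
            * Real.sqrt (variance (ξ ⟨0, hn⟩) μ) := by
  classical
  have hne : (Finset.univ : Finset (Fin n)).Nonempty :=
    Finset.univ_nonempty_iff.mpr (Fin.pos_iff_nonempty.mp hn)
  set ξ0 : Ω → ℝ := ξ ⟨0, hn⟩ with hξ0
  have hmeas0 : Measurable ξ0 := hmeas _
  set ν : Measure ℝ := μ.map ξ0 with hν
  haveI : IsProbabilityMeasure ν := Measure.isProbabilityMeasure_map hmeas0.aemeasurable
  set I : Set ℝ := Set.Ioo 0 1 with hI
  set P : Measure ℝ := volume.restrict I with hP
  haveI : IsProbabilityMeasure P := by rw [hP, hI]; infer_instance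
  set Q : ℝ → ℝ := qf ν with hQdef
  have hQae : AEMeasurable Q P := qf_aemeasurable
  have hmap : P.map Q = ν := qf_map_volume
  set m : ℝ := ∫ ω, ξ0 ω ∂μ with hm
  -- transfer of L² data through the quantile function
  have hQ2 : MemLp Q 2 P := by
    have h2 : MemLp (id : ℝ → ℝ) 2 ν := by
      rw [hν]
      exact (memLp_map_measure_iff aestronglyMeasurable_id hmeas0.aemeasurable).2 hvar
    rw [← hmap] at h2
    exact (memLp_map_measure_iff aestronglyMeasurable_id hQae).1 h2
  have hQ1 : Integrable Q P := hQ2.integrable one_le_two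
  have hmQ : ∫ p, Q p ∂P = m := by
    have h1 : ∫ x, x ∂ν = ∫ ω, ξ0 ω ∂μ := by
      rw [hν]
      exact integral_map hmeas0.aemeasurable aestronglyMeasurable_id
    have h2 : ∫ x, x ∂ν = ∫ p, Q p ∂P := by
      rw [← hmap]
      exact integral_map hQae aestronglyMeasurable_id
    rw [← h2, h1, hm]
  have hvarQ : ∫ p, (Q p - m) ^ 2 ∂P = variance ξ0 μ := by
    have h1 : variance ξ0 μ = ∫ ω, (ξ0 ω - m) ^ 2 ∂μ := by
      exact variance_eq_integral hvar.1.aemeasurable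
    have hcont : AEStronglyMeasurable (fun x : ℝ => (x - m) ^ 2) ν :=
      ((continuous_id.sub continuous_const).pow 2).aestronglyMeasurable
    have h2 : ∫ x, (x - m) ^ 2 ∂ν = ∫ ω, (ξ0 ω - m) ^ 2 ∂μ := by
      rw [hν, integral_map hmeas0.aemeasurable]
      · rw [← hν]; exact hcont
    have h3 : ∫ x, (x - m) ^ 2 ∂ν = ∫ p, (Q p - m) ^ 2 ∂P := by
      rw [← hmap, integral_map hQae]
      rw [hmap]; exact hcont
    rw [h1, ← h2, h3]
  -- the max and its law
  set M : Ω → ℝ := fun ω => Finset.univ.sup' hne fun k => ξ k ω with hMdef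
  have hMmeas : Measurable M := by
    have h : M = Finset.univ.sup' hne ξ := by
      funext ω
      rw [hMdef]
      exact (Finset.sup'_apply hne ξ ω).symm
    rw [h]
    exact Finset.measurable_sup' hne fun k _ => hmeas k
  set w : ℝ → ℝ := fun p => (n : ℝ) * p ^ (n - 1) with hwdef
  have hwmeas : Measurable w := (continuous_const.mul (continuous_pow _)).measurable
  set Pn : Measure ℝ := P.withDensity (fun p => ENNReal.ofReal (w p)) with hPn
  have hQaen : AEMeasurable Q Pn := hQae.mono_ac (withDensity_absolutelyContinuous _ _)
  have hlaw : μ.map M = Pn.map Q := by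
    haveI : IsProbabilityMeasure (μ.map M) := Measure.isProbabilityMeasure_map hMmeas.aemeasurable
    refine Measure.ext_of_Iic _ _ fun x => ?_
    have hset : M ⁻¹' Set.Iic x = ⋂ k, ξ k ⁻¹' Set.Iic x := by
      ext ω
      simp only [Set.mem_preimage, Set.mem_Iic, Set.mem_iInter, hMdef, Finset.sup'_le_iff]
      exact ⟨fun h k => h k (Finset.mem_univ k), fun h k _ => h k⟩
    have hLHS : (μ.map M) (Set.Iic x) = ENNReal.ofReal (cdf ν x ^ n) := by
      rw [Measure.map_apply hMmeas measurableSet_Iic, hset,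
        hindep.meas_iInter (fun i => ⟨Set.Iic x, measurableSet_Iic, rfl⟩)]
      have hid : ∀ k : Fin n, μ (ξ k ⁻¹' Set.Iic x) = ENNReal.ofReal (cdf ν x) := by
        intro k
        rw [← Measure.map_apply (hmeas k) measurableSet_Iic, (hident k).map_eq, ← hν,
          ofReal_cdf]
      simp_rw [hid]
      rw [Finset.prod_const, Finset.card_univ, Fintype.card_fin,
        ← ENNReal.ofReal_pow (cdf_nonneg ν x)]
    have hRHS : (Pn.map Q) (Set.Iic x) = ENNReal.ofReal (cdf ν x ^ n) := by
      rw [Measure.map_apply_of_aemeasurable hQaen measurableSet_Iic]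
      have hnullc : Pn Iᶜ = 0 := by
        have hPI : P Iᶜ = 0 := by
          rw [hP, Measure.restrict_apply measurableSet_Ioo.compl]
          simp [hI]
        exact (withDensity_absolutelyContinuous _ _) hPI
      have hae : (Q ⁻¹' Set.Iic x : Set ℝ) =ᵐ[Pn] (I ∩ Set.Iic (cdf ν x) : Set ℝ) := by
        rw [MeasureTheory.ae_eq_set]
        constructor
        · refine measure_mono_null (fun p hp => ?_) hnullc
          rcases hp with ⟨hp1, hp2⟩
          intro hpI
          exact hp2 ⟨hpI, (qf_le_iff hpI x).1 hp1⟩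
        · refine measure_mono_null (fun p hp => ?_) hnullc
          rcases hp with ⟨⟨hpI, hple⟩, hp2⟩
          intro hpI'
          exact hp2 ((qf_le_iff hpI' x).2 hple)
      rw [measure_congr hae, hPn,
        withDensity_apply _ (measurableSet_Ioo.inter measurableSet_Iic), hP,
        Measure.restrict_restrict (measurableSet_Ioo.inter measurableSet_Iic)]
      have hint : (I ∩ Set.Iic (cdf ν x)) ∩ I = I ∩ Set.Iic (cdf ν x) := by
        rw [Set.inter_right_comm, Set.inter_self]
      rw [hint, setLIntegral_congr (Ioo_inter_Iic_ae_Ioc (cdf_le_one ν x)),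
        my_setLIntegral_pow n hn (cdf_nonneg ν x)]
    rw [hLHS, hRHS]
  -- expected value of the max via the quantile function
  have hEM : ∫ ω, M ω ∂μ = ∫ p, w p * Q p ∂P := by
    have h1 : ∫ ω, M ω ∂μ = ∫ x, x ∂(μ.map M) :=
      (integral_map hMmeas.aemeasurable aestronglyMeasurable_id).symm
    have h1' : ∫ x, x ∂(Pn.map Q) = ∫ p, Q p ∂Pn :=
      integral_map hQaen aestronglyMeasurable_id
    rw [h1, hlaw, h1', hPn]
    rw [show (fun p => ENNReal.ofReal (w p)) = (fun p => ((w p).toNNReal : ℝ≥0∞)) from rfl,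
      integral_withDensity_eq_integral_smul hwmeas.real_toNNReal Q]
    refine integral_congr_ae ((ae_restrict_iff' measurableSet_Ioo).2
      (Filter.Eventually.of_forall fun p hp => ?_))
    have hp0 : (0:ℝ) ≤ p := hp.1.le
    have hw0 : 0 ≤ w p := mul_nonneg (Nat.cast_nonneg n) (pow_nonneg hp0 _)
    show (w p).toNNReal • Q p = w p * Q p
    rw [NNReal.smul_def, Real.coe_toNNReal _ hw0, smul_eq_mul]
  -- integrals of the weight function
  have hw_int : ∫ p, w p ∂P = 1 := by
    rw [hP, setIntegral_congr_set (MeasureTheory.Ioo_ae_eq_Ioc (a := (0:ℝ)) (b := 1)), hwdef,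
      my_setIntegral_pow n hn zero_le_one, one_pow]
  have h2n1 : (0:ℝ) < 2 * (n:ℝ) - 1 := by
    have : (1:ℝ) ≤ (n:ℝ) := by exact_mod_cast hn
    linarith
  have hw2_int : ∫ p, w p ^ 2 ∂P = (n:ℝ)^2 / (2*(n:ℝ) - 1) := by
    have hcast : ((2*n-1 : ℕ):ℝ) = 2*(n:ℝ) - 1 := by
      have h1 : (1:ℕ) ≤ 2*n := by omega
      push_cast [Nat.cast_sub h1]
      ring
    have he : ∀ p : ℝ, (w p)^2
        = ((n:ℝ)^2 / (2*(n:ℝ)-1)) * (((2*n-1 : ℕ):ℝ) * p ^ ((2*n-1) - 1)) := by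
      intro p
      have h2 : (2*n-1) - 1 = 2*(n-1) := by omega
      rw [h2, hcast, hwdef]
      have h3 : p ^ (2*(n-1)) = (p ^ (n-1))^2 := by
        rw [← pow_mul, mul_comm]
      rw [h3]
      rw [← mul_assoc, div_mul_cancel₀ _ h2n1.ne']
      ring
    simp_rw [he]
    rw [MeasureTheory.integral_const_mul, hP,
      setIntegral_congr_set (MeasureTheory.Ioo_ae_eq_Ioc (a := (0:ℝ)) (b := 1)),
      my_setIntegral_pow (2*n-1) (by omega) zero_le_one, one_pow, mul_one]
  have hw2 : MemLp w 2 P := by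
    refine MemLp.of_bound hwmeas.aestronglyMeasurable (n:ℝ)
      ((ae_restrict_iff' measurableSet_Ioo).2 (Filter.Eventually.of_forall fun p hp => ?_))
    have hw0 : (0:ℝ) ≤ (n:ℝ) * p ^ (n-1) := mul_nonneg (Nat.cast_nonneg n) (pow_nonneg hp.1.le _)
    rw [hwdef, Real.norm_eq_abs, abs_of_nonneg hw0]
    have hple : p ^ (n-1) ≤ 1 := pow_le_one₀ hp.1.le hp.2.le
    calc (n:ℝ) * p ^ (n-1) ≤ (n:ℝ) * 1 := by
          exact mul_le_mul_of_nonneg_left hple (Nat.cast_nonneg n)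
      _ = (n:ℝ) := mul_one _
  -- main computation
  have hQw : Integrable (fun p => Q p * w p) P := my_integrable_mul hQ2 hw2
  have hwInt : Integrable w P := hw2.integrable one_le_two
  have key : ∫ ω, M ω ∂μ - m = ∫ p, (Q p - m) * (w p - 1) ∂P := by
    have h1 : Integrable (fun p => Q p * w p - m * w p) P := hQw.sub (hwInt.const_mul m)
    have h2 : Integrable (fun p => Q p - m) P := hQ1.sub (integrable_const m)
    rw [show (fun p => (Q p - m) * (w p - 1))
        = fun p => (Q p * w p - m * w p) - (Q p - m) from funext fun p => by ring]
    rw [integral_sub h1 h2, integral_sub hQw (hwInt.const_mul m), integral_sub hQ1 (integrable_const m),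
      MeasureTheory.integral_const_mul, hw_int, hmQ, integral_const]
    simp only [measure_univ, probReal_univ, ENNReal.toReal_one, smul_eq_mul, one_mul, mul_one]
    have : ∫ p, Q p * w p ∂P = ∫ ω, M ω ∂μ := by
      rw [hEM]
      exact integral_congr_ae (Filter.Eventually.of_forall fun p => mul_comm _ _)
    rw [this]
    ring
  have hCS : ∫ p, (Q p - m) * (w p - 1) ∂P
      ≤ Real.sqrt (∫ p, (Q p - m)^2 ∂P) * Real.sqrt (∫ p, (w p - 1)^2 ∂P) :=
    my_integral_mul_le (hQ2.sub (memLp_const m)) (hw2.sub (memLp_const 1))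
  have hg2 : ∫ p, (w p - 1)^2 ∂P = ((n:ℝ) - 1)^2 / (2*(n:ℝ) - 1) := by
    rw [show (fun p => (w p - 1)^2) = fun p => (w p ^ 2 - 2 * w p) + 1 from
      funext fun p => by ring]
    have ha : Integrable (fun p => w p ^ 2 - 2 * w p) P := (hw2.integrable_sq).sub (hwInt.const_mul 2)
    rw [integral_add ha (integrable_const 1),
      integral_sub hw2.integrable_sq (hwInt.const_mul 2), MeasureTheory.integral_const_mul,
      hw_int, hw2_int, integral_const]
    simp only [measure_univ, probReal_univ, ENNReal.toReal_one, smul_eq_mul, one_mul, mul_one]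
    rw [eq_div_iff h2n1.ne', add_mul, sub_mul, div_mul_cancel₀ _ h2n1.ne']
    ring
  have hsqrtg : Real.sqrt (((n:ℝ) - 1)^2 / (2*(n:ℝ) - 1))
      = ((n:ℝ) - 1) / Real.sqrt (2*(n:ℝ) - 1) := by
    rw [Real.sqrt_div (sq_nonneg _), Real.sqrt_sq]
    have : (1:ℝ) ≤ (n:ℝ) := by exact_mod_cast hn
    linarith
  have final : ∫ ω, M ω ∂μ ≤ m + ((n:ℝ) - 1) / Real.sqrt (2*(n:ℝ) - 1)
      * Real.sqrt (variance ξ0 μ) := by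
    rw [hvarQ, hg2, hsqrtg] at hCS
    linarith [key, hCS,
      mul_comm (Real.sqrt (variance ξ0 μ)) (((n:ℝ)-1)/Real.sqrt (2*(n:ℝ)-1))]
  exact final
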